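/- Pinsker-type inequality for Markov divergences: Let P, Q be m×m ergodic transition matrices with stationary distributions π_P, π_Q respectively, and let g : [m] → ℝ be non-constant. Let ω be any solution of the Poisson equation (I−P)ω = g − (π_P g)·𝟏. Then ∑ᵢ π_Q(i)·KL(Q(i,·) ‖ P(i,·)) ≥ (E_{π_Q}[g] − E_{π_P}[g])² / (2‖ω‖_∞²). -/

import Mathlib

open scoped ENNReal


private lemma hasDerivAt_k {x : ℝ} (hx : 0 < x) :
    HasDerivAt (fun y => (y+1)*Real.log y - 2*(y-1)) (Real.log x + (x+1)*x⁻¹ - 2) x := by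
  have h1 : HasDerivAt (fun y : ℝ => y + 1) 1 x := (hasDerivAt_id x).add_const 1
  have h2 := Real.hasDerivAt_log hx.ne'
  have h3 : HasDerivAt (fun y : ℝ => 2*(y-1)) 2 x := by
    simpa using ((hasDerivAt_id x).sub_const 1).const_mul 2
  exact ((h1.mul h2).sub h3).congr_deriv (by ring)

private lemma k_deriv_nonneg {x : ℝ} (hx : 0 < x) : 0 ≤ Real.log x + (x+1)*x⁻¹ - 2 := by
  have h1 := Real.one_sub_inv_le_log_of_pos hx
  have h2 : x * x⁻¹ = 1 := mul_inv_cancel₀ hx.ne'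
  nlinarith

private lemma k_mono {u v : ℝ} (hu : 0 < u) (huv : u ≤ v) :
    (u+1)*Real.log u - 2*(u-1) ≤ (v+1)*Real.log v - 2*(v-1) := by
  have mono : MonotoneOn (fun y => (y+1)*Real.log y - 2*(y-1)) (Set.Icc u v) := by
    apply monotoneOn_of_deriv_nonneg (convex_Icc u v)
    · intro y hy
      exact (hasDerivAt_k (lt_of_lt_of_le hu hy.1)).continuousAt.continuousWithinAt
    · intro y hy
      rw [interior_Icc] at hy
      exact (hasDerivAt_k (lt_trans hu hy.1)).differentiableAt.differentiableWithinAt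
    · intro y hy
      rw [interior_Icc] at hy
      have hy0 : (0:ℝ) < y := lt_trans hu hy.1
      rw [(hasDerivAt_k hy0).deriv]
      exact k_deriv_nonneg hy0
  exact mono (Set.left_mem_Icc.2 huv) (Set.right_mem_Icc.2 huv) huv

private lemma hasDerivAt_h {x : ℝ} (hx : 0 < x) :
    HasDerivAt (fun y => 2*(y+2)*(y*Real.log y - y + 1) - 3*(y-1)^2)
      (4*((x+1)*Real.log x - 2*(x-1))) x := by
  have h1 : HasDerivAt (fun y : ℝ => 2*(y+2)) 2 x := by
    simpa using ((hasDerivAt_id x).add_const 2).const_mul 2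
  have h2 : HasDerivAt (fun y : ℝ => y*Real.log y - y + 1) (Real.log x + 1 - 1) x :=
    ((Real.hasDerivAt_mul_log hx.ne').sub (hasDerivAt_id x)).add_const 1
  have h3 : HasDerivAt (fun y : ℝ => 3*(y-1)^2) (3*(2*(x-1)^1*1)) x :=
    (((hasDerivAt_id x).sub_const 1).pow 2).const_mul 3
  exact ((h1.mul h2).sub h3).congr_deriv (by ring)

private lemma key_ineq {x : ℝ} (hx : 0 ≤ x) :
    3*(x-1)^2 ≤ 2*(x+2)*(x*Real.log x - x + 1) := by
  rcases eq_or_lt_of_le hx with h0 | h0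
  · rw [← h0]; norm_num
  set h : ℝ → ℝ := fun y => 2*(y+2)*(y*Real.log y - y + 1) - 3*(y-1)^2 with hh
  have h1 : h 1 = 0 := by simp [hh]
  suffices hs : 0 ≤ h x by simp only [hh] at hs; linarith
  rcases le_total 1 x with hx1 | hx1
  · have mono : MonotoneOn h (Set.Icc 1 x) := by
      apply monotoneOn_of_deriv_nonneg (convex_Icc 1 x)
      · intro y hy
        exact (hasDerivAt_h (by linarith [hy.1] : (0:ℝ) < y)).continuousAt.continuousWithinAt
      · intro y hy
        rw [interior_Icc] at hy
        exact (hasDerivAt_h (by linarith [hy.1])).differentiableAt.differentiableWithinAt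
      · intro y hy
        rw [interior_Icc] at hy
        have hy1 : (1:ℝ) ≤ y := le_of_lt hy.1
        rw [(hasDerivAt_h (by linarith : (0:ℝ) < y)).deriv]
        have := k_mono one_pos hy1
        simp only [Real.log_one] at this
        linarith
    have := mono (Set.left_mem_Icc.2 hx1) (Set.right_mem_Icc.2 hx1) hx1
    rw [h1] at this; exact this
  · have anti : AntitoneOn h (Set.Icc x 1) := by
      apply antitoneOn_of_deriv_nonpos (convex_Icc x 1)
      · intro y hy
        exact (hasDerivAt_h (lt_of_lt_of_le h0 hy.1)).continuousAt.continuousWithinAt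
      · intro y hy
        rw [interior_Icc] at hy
        exact (hasDerivAt_h (lt_trans h0 hy.1)).differentiableAt.differentiableWithinAt
      · intro y hy
        rw [interior_Icc] at hy
        have hy0 : (0:ℝ) < y := lt_trans h0 hy.1
        rw [(hasDerivAt_h hy0).deriv]
        have := k_mono hy0 (le_of_lt hy.2)
        simp only [Real.log_one] at this
        linarith
    have := anti (Set.left_mem_Icc.2 hx1) (Set.right_mem_Icc.2 hx1) hx1
    rw [h1] at this; exact this

private lemma ptwise {p q : ℝ} (hp : 0 ≤ p) (hq : 0 ≤ q) (hac : p = 0 → q = 0) :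
    3*(q-p)^2 ≤ 2*(q+2*p)*(q*Real.log (q/p) - q + p) := by
  rcases eq_or_lt_of_le hp with h0 | h0
  · rw [hac h0.symm, ← h0]; norm_num
  · set r := q / p with hrr
    have hr0 : 0 ≤ r := div_nonneg hq h0.le
    have hq' : q = p * r := by rw [hrr, mul_div_cancel₀ q h0.ne']
    have hr := key_ineq hr0
    set L := Real.log r with hL
    have e1 : q - p = p*(r-1) := by rw [hq']; ring
    have e2 : q + 2*p = p*(r+2) := by rw [hq']; ring
    have e3 : q*L - q + p = p*(r*L - r + 1) := by rw [hq']; ring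
    rw [e1, e2, e3]
    nlinarith [mul_le_mul_of_nonneg_left hr (sq_nonneg p)]

private lemma pinsker {m : ℕ} (q p : Fin m → ℝ) (hq0 : ∀ j, 0 ≤ q j) (hp0 : ∀ j, 0 ≤ p j)
    (hq1 : ∑ j, q j = 1) (hp1 : ∑ j, p j = 1) (hac : ∀ j, p j = 0 → q j = 0) :
    (∑ j, |q j - p j|)^2 ≤ 2 * ∑ j, q j * Real.log (q j / p j) := by
  set a : Fin m → ℝ := fun j => (q j + 2*p j)/3 with ha
  set b : Fin m → ℝ := fun j => (q j - p j)^2 / a j with hb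
  have ha0 : ∀ j, 0 ≤ a j := fun j => by
    have := hq0 j; have := hp0 j; positivity
  have hb0 : ∀ j, 0 ≤ b j := fun j => div_nonneg (sq_nonneg _) (ha0 j)
  have hsq : ∀ j, |q j - p j| ^ 2 = a j * b j := by
    intro j
    rw [sq_abs]
    rcases eq_or_lt_of_le (ha0 j) with h0 | h0
    · have hqj : q j = 0 := by have := hq0 j; have := hp0 j; simp only [ha] at h0; nlinarith
      have hpj : p j = 0 := by have := hq0 j; have := hp0 j; simp only [ha] at h0; nlinarith
      rw [hqj, hpj]; simp [hb]
      exact Or.inl h0.symm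
    · rw [hb, mul_div_cancel₀ _ h0.ne']
  have hble : ∀ j, b j ≤ 2*(q j * Real.log (q j / p j) - q j + p j) := by
    intro j
    rcases eq_or_lt_of_le (ha0 j) with h0 | h0
    · have hqj : q j = 0 := by have := hq0 j; have := hp0 j; simp only [ha] at h0; nlinarith
      have hpj : p j = 0 := by have := hq0 j; have := hp0 j; simp only [ha] at h0; nlinarith
      rw [hb, hqj, hpj]; norm_num
      rw [← h0]; simp
    · rw [hb, div_le_iff₀ h0]
      have := ptwise (hp0 j) (hq0 j) (hac j)
      simp only [ha]
      nlinarith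
  have hsuma : ∑ j, a j = 1 := by
    simp only [ha]
    rw [← Finset.sum_div, Finset.sum_add_distrib, ← Finset.mul_sum, hq1, hp1]
    norm_num
  calc (∑ j, |q j - p j|)^2 ≤ (∑ j, a j) * (∑ j, b j) :=
        Finset.sum_sq_le_sum_mul_sum_of_sq_eq_mul _
          (fun j _ => ha0 j) (fun j _ => hb0 j) (fun j _ => hsq j)
    _ = ∑ j, b j := by rw [hsuma, one_mul]
    _ ≤ ∑ j, 2*(q j * Real.log (q j / p j) - q j + p j) :=
        Finset.sum_le_sum (fun j _ => hble j)
    _ = 2 * ∑ j, q j * Real.log (q j / p j) := by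
        rw [← Finset.mul_sum]
        congr 1
        rw [Finset.sum_add_distrib, Finset.sum_sub_distrib, hq1, hp1]
        ring

/-- KL divergence between two finitely supported distributions, `+∞` if `q` is not
absolutely continuous w.r.t. `p`. -/
noncomputable def klDiv {m : ℕ} (q p : Fin m → ℝ) : ℝ≥0∞ :=
  if ∀ j, p j = 0 → q j = 0 then
    ENNReal.ofReal (∑ j, q j * Real.log (q j / p j)) else ⊤

theorem stmt11 (m : ℕ) (hm : 0 < m)
    (P Q : Matrix (Fin m) (Fin m) ℝ)
    (hP0 : ∀ i j, 0 ≤ P i j) (hP1 : ∀ i, ∑ j, P i j = 1)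
    (hQ0 : ∀ i j, 0 ≤ Q i j) (hQ1 : ∀ i, ∑ j, Q i j = 1)
    (hPerg : ∃ n : ℕ, ∀ i j, 0 < (P ^ n) i j)
    (hQerg : ∃ n : ℕ, ∀ i j, 0 < (Q ^ n) i j)
    (πP πQ : Fin m → ℝ)
    (hπP0 : ∀ i, 0 ≤ πP i) (hπP1 : ∑ i, πP i = 1)
    (hπQ0 : ∀ i, 0 ≤ πQ i) (hπQ1 : ∑ i, πQ i = 1)
    (hPstat : ∀ j, ∑ i, πP i * P i j = πP j)
    (hQstat : ∀ j, ∑ i, πQ i * Q i j = πQ j)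
    (g : Fin m → ℝ) (hg : ∃ i j, g i ≠ g j)
    (ω : Fin m → ℝ)
    (hpoisson : ((1 : Matrix (Fin m) (Fin m) ℝ) - P).mulVec ω =
      fun i => g i - ∑ j, πP j * g j) :
    ENNReal.ofReal ((∑ i, πQ i * g i - ∑ i, πP i * g i) ^ 2 / (2 * ‖ω‖ ^ 2)) ≤
      ∑ i, ENNReal.ofReal (πQ i) * klDiv (Q i) (P i) := by
  classical
  by_cases hbad : ∀ i, πQ i ≠ 0 → ∀ j, P i j = 0 → Q i j = 0
  case neg =>
    push_neg at hbad
    obtain ⟨i, hi, j, hPij, hQij⟩ := hbad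
    have hkl : klDiv (Q i) (P i) = ⊤ := by
      rw [klDiv, if_neg]
      push_neg
      exact ⟨j, hPij, hQij⟩
    have hπpos : (0:ℝ) < πQ i := lt_of_le_of_ne (hπQ0 i) (Ne.symm hi)
    have hterm : ENNReal.ofReal (πQ i) * klDiv (Q i) (P i) = ⊤ := by
      rw [hkl, ENNReal.mul_top]
      simp [ENNReal.ofReal_eq_zero, not_le, hπpos]
    refine le_trans le_top ?_
    calc (⊤ : ℝ≥0∞) = ENNReal.ofReal (πQ i) * klDiv (Q i) (P i) := hterm.symm
      _ ≤ _ := Finset.single_le_sum (f := fun i' => ENNReal.ofReal (πQ i') * klDiv (Q i') (P i')) (fun _ _ => zero_le) (Finset.mem_univ i)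
  case pos =>
  set c := ∑ j, πP j * g j with hc
  set K : Fin m → ℝ := fun i => ∑ j, Q i j * Real.log (Q i j / P i j) with hK
  set t : Fin m → ℝ := fun i => ∑ j, |Q i j - P i j| with ht
  have hpins : ∀ i, πQ i ≠ 0 → (t i)^2 ≤ 2 * K i := fun i hi =>
    pinsker (Q i) (P i) (hQ0 i) (hP0 i) (hQ1 i) (hP1 i) (hbad i hi)
  set f : Fin m → ℝ := fun i => if πQ i = 0 then 0 else K i with hf
  have hf0 : ∀ i, 0 ≤ πQ i * f i := by
    intro i
    by_cases hi : πQ i = 0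
    · simp [hf, hi]
    · have h1 := hpins i hi
      have : 0 ≤ K i := by nlinarith [sq_nonneg (t i)]
      simp only [hf, if_neg hi]
      exact mul_nonneg (hπQ0 i) this
  have hRHS : ∑ i, ENNReal.ofReal (πQ i) * klDiv (Q i) (P i)
      = ENNReal.ofReal (∑ i, πQ i * f i) := by
    rw [ENNReal.ofReal_sum_of_nonneg (fun i _ => hf0 i)]
    refine Finset.sum_congr rfl (fun i _ => ?_)
    by_cases hi : πQ i = 0
    · simp [hf, hi]
    · rw [klDiv, if_pos (hbad i hi)]
      rw [← ENNReal.ofReal_mul (hπQ0 i)]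
      simp [hf, if_neg hi, hK]
  rw [hRHS]
  apply ENNReal.ofReal_le_ofReal
  -- real inequality
  have hω : ω ≠ 0 := by
    rintro rfl
    rw [Matrix.mulVec_zero] at hpoisson
    obtain ⟨i, j, hij⟩ := hg
    have hi := congrFun hpoisson i
    have hj := congrFun hpoisson j
    simp only [Pi.zero_apply] at hi hj
    apply hij
    have : g i - c = 0 := hi.symm
    have : g j - c = 0 := hj.symm
    linarith [hi.symm, hj.symm]
  have hωpos : (0:ℝ) < ‖ω‖ := norm_pos_iff.2 hω
  have hpo : ∀ i, ω i - ∑ j, P i j * ω j = g i - c := by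
    intro i
    have := congrFun hpoisson i
    simpa [Matrix.mulVec, dotProduct, Matrix.sub_apply, Matrix.one_apply, sub_mul, Finset.sum_sub_distrib, ite_mul] using this
  set d : Fin m → ℝ := fun i => ∑ j, (Q i j - P i j) * ω j with hd
  have e3 : ∑ i, πQ i * ∑ j, Q i j * ω j = ∑ i, πQ i * ω i := by
    simp_rw [Finset.mul_sum]
    rw [Finset.sum_comm]
    simp_rw [← mul_assoc, ← Finset.sum_mul, hQstat]
  have hΔ : ∑ i, πQ i * g i - c = ∑ i, πQ i * d i := by
    calc ∑ i, πQ i * g i - c = ∑ i, πQ i * (g i - c) := by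
          simp only [mul_sub, Finset.sum_sub_distrib, ← Finset.sum_mul, hπQ1, one_mul]
      _ = ∑ i, πQ i * (ω i - ∑ j, P i j * ω j) := by
          refine Finset.sum_congr rfl (fun i _ => ?_)
          rw [hpo i]
      _ = ∑ i, πQ i * ω i - ∑ i, πQ i * ∑ j, P i j * ω j := by
          simp [mul_sub, Finset.sum_sub_distrib]
      _ = ∑ i, πQ i * ∑ j, Q i j * ω j - ∑ i, πQ i * ∑ j, P i j * ω j := by rw [e3]
      _ = ∑ i, πQ i * d i := by
          simp only [hd, sub_mul, Finset.sum_sub_distrib, mul_sub]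
  have hdb : ∀ i, |d i| ≤ ‖ω‖ * t i := by
    intro i
    calc |d i| ≤ ∑ j, |(Q i j - P i j) * ω j| := Finset.abs_sum_le_sum_abs _ _
      _ ≤ ∑ j, |Q i j - P i j| * ‖ω‖ := by
          refine Finset.sum_le_sum (fun j _ => ?_)
          rw [abs_mul]
          have h1 : |ω j| ≤ ‖ω‖ := by
            simpa [Real.norm_eq_abs] using norm_le_pi_norm ω j
          exact mul_le_mul_of_nonneg_left h1 (abs_nonneg _)
      _ = ‖ω‖ * t i := by rw [← Finset.sum_mul, ht]; ring
  have hcs : (∑ i, πQ i * d i)^2 ≤ ∑ i, πQ i * (d i)^2 := by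
    have := Finset.sum_sq_le_sum_mul_sum_of_sq_eq_mul Finset.univ
      (r := fun i => πQ i * d i) (f := fun i => πQ i) (g := fun i => πQ i * d i ^ 2)
      (fun i _ => hπQ0 i) (fun i _ => mul_nonneg (hπQ0 i) (sq_nonneg _))
      (fun i _ => by ring)
    simpa [hπQ1] using this
  have hsum : ∑ i, πQ i * d i ^ 2 ≤ 2*‖ω‖^2 * ∑ i, πQ i * f i := by
    rw [Finset.mul_sum]
    refine Finset.sum_le_sum (fun i _ => ?_)
    by_cases hi : πQ i = 0
    · simp [hi]
    · have h1 : d i ^ 2 ≤ ‖ω‖^2 * t i ^ 2 := by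
        nlinarith [hdb i, abs_nonneg (d i), sq_abs (d i)]
      have h2 := hpins i hi
      have hπ := hπQ0 i
      simp only [hf, if_neg hi]
      nlinarith [mul_le_mul_of_nonneg_left h1 hπ,
        mul_le_mul_of_nonneg_left h2 (mul_nonneg hπ (sq_nonneg ‖ω‖))]
  rw [div_le_iff₀ (by positivity : (0:ℝ) < 2 * ‖ω‖^2)]
  rw [hΔ]
  calc (∑ i, πQ i * d i)^2 ≤ ∑ i, πQ i * (d i)^2 := hcs
    _ ≤ 2*‖ω‖^2 * ∑ i, πQ i * f i := hsum
    _ = (∑ i, πQ i * f i) * (2 * ‖ω‖^2) := by ring
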